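/- Row (cell) update monotonicity: let C_X' : X → X* be any clustering function such that for every x ∈ X, D(p(·|x) ‖ p̂(·|C_X' x)) ≤ D(p(·|x) ‖ p̂(·|C_X x)), where p̂ is computed from the current pair (C_X, C_W); in particular this holds for the pointwise update C_X'(x) = argmin_{x* ∈ X*} D(p(·|x) ‖ p̂(·|x*)). Then the objective does not increase: ℓ_A(C_X', C_W) ≤ ℓ_A(C_X, C_W). -/

import Mathlib

open scoped BigOperators

noncomputable section

/-- Kullback–Leibler divergence `D(g‖h)` between nonnegative functions on a finite type,
`D(g‖h) = ∑_{t : g t > 0} g t * log (g t / h t)`, with the convention `D(g‖h) = ⊤`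
whenever `g t > 0 = h t` for some `t`. -/
def KLdiv {T : Type*} [Fintype T] (g h : T → ℝ) : EReal :=
  if ∃ t, 0 < g t ∧ h t = 0 then ⊤
  else ((∑ t ∈ Finset.univ.filter (fun t => 0 < g t),
      g t * Real.log (g t / h t) : ℝ) : EReal)

/-- Row marginal `p₁(x) = ∑_w p(x,w)`. -/
def marg₁ {A B : Type*} [Fintype B] (p : A × B → ℝ) (x : A) : ℝ := ∑ w, p (x, w)

/-- Column marginal `p₂(w) = ∑_x p(x,w)`. -/
def marg₂ {A B : Type*} [Fintype A] (p : A × B → ℝ) (w : B) : ℝ := ∑ x, p (x, w)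

/-- Co-clustered distribution `p*(x*,w*) = ∑_{x : C_X x = x*} ∑_{w : C_W w = w*} p(x,w)`. -/
def coclust {A B As Bs : Type*} [Fintype A] [Fintype B] [DecidableEq As] [DecidableEq Bs]
    (p : A × B → ℝ) (CX : A → As) (CW : B → Bs) : As × Bs → ℝ :=
  fun c => ∑ x ∈ Finset.univ.filter (fun x => CX x = c.1),
             ∑ w ∈ Finset.univ.filter (fun w => CW w = c.2), p (x, w)

/-- Approximating distribution
`p̂(x,w) = p*(C_X x, C_W w) · p₁(x) · p₂(w) / (p₁*(C_X x) · p₂*(C_W w))`. -/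
def approx {A B As Bs : Type*} [Fintype A] [Fintype B] [Fintype As] [Fintype Bs]
    [DecidableEq As] [DecidableEq Bs]
    (p : A × B → ℝ) (CX : A → As) (CW : B → Bs) : A × B → ℝ :=
  fun c =>
    coclust p CX CW (CX c.1, CW c.2) * marg₁ p c.1 * marg₂ p c.2 /
      (marg₁ (coclust p CX CW) (CX c.1) * marg₂ (coclust p CX CW) (CW c.2))

/-- Conditional distribution `p(w|x) = p(x,w)/p₁(x)` on `B`. -/
def condRow {A B : Type*} [Fintype B] (p : A × B → ℝ) (x : A) : B → ℝ :=
  fun w => p (x, w) / marg₁ p x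

/-- Conditional distribution `p(x|w) = p(x,w)/p₂(w)` on `A`. -/
def condCol {A B : Type*} [Fintype A] (p : A × B → ℝ) (w : B) : A → ℝ :=
  fun x => p (x, w) / marg₂ p w

/-- Conditional approximating distribution
`p̂(w|x*) = p*(x*, C_W w) · p₂(w) / (p₁*(x*) · p₂*(C_W w))` on `B`. -/
def approxCondRow {A B As Bs : Type*} [Fintype A] [Fintype B] [Fintype As] [Fintype Bs]
    [DecidableEq As] [DecidableEq Bs]
    (p : A × B → ℝ) (CX : A → As) (CW : B → Bs) (xs : As) : B → ℝ :=
  fun w =>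
    coclust p CX CW (xs, CW w) * marg₂ p w /
      (marg₁ (coclust p CX CW) xs * marg₂ (coclust p CX CW) (CW w))

/-- Conditional approximating distribution
`p̂(x|w*) = p*(C_X x, w*) · p₁(x) / (p₂*(w*) · p₁*(C_X x))` on `A`. -/
def approxCondCol {A B As Bs : Type*} [Fintype A] [Fintype B] [Fintype As] [Fintype Bs]
    [DecidableEq As] [DecidableEq Bs]
    (p : A × B → ℝ) (CX : A → As) (CW : B → Bs) (ws : Bs) : A → ℝ :=
  fun x =>
    coclust p CX CW (CX x, ws) * marg₁ p x /
      (marg₂ (coclust p CX CW) ws * marg₁ (coclust p CX CW) (CX x))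

/-- Mutual information `I(p) = ∑_{x,w} p(x,w) · log (p(x,w)/(p₁(x)·p₂(w)))`
(summing over all pairs; used for the strictly positive original distribution). -/
def mutualInfoFull {A B : Type*} [Fintype A] [Fintype B] (p : A × B → ℝ) : ℝ :=
  ∑ x, ∑ w, p (x, w) * Real.log (p (x, w) / (marg₁ p x * marg₂ p w))

/-- Mutual information `I(p*) = ∑_{(x*,w*) : p*(x*,w*) > 0} p*(x*,w*) ·
log (p*(x*,w*)/(p₁*(x*)·p₂*(w*)))` (summing only over positive entries). -/
def mutualInfoPos {A B : Type*} [Fintype A] [Fintype B] (p : A × B → ℝ) : ℝ :=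
  ∑ c ∈ Finset.univ.filter (fun c : A × B => 0 < p c),
    p c * Real.log (p c / (marg₁ p c.1 * marg₂ p c.2))

/-- The co-clustering objective `ℓ_A(C_X, C_W) = I(p) − I(p*)`. -/
def lossA {A B As Bs : Type*} [Fintype A] [Fintype B] [Fintype As] [Fintype Bs]
    [DecidableEq As] [DecidableEq Bs]
    (p : A × B → ℝ) (CX : A → As) (CW : B → Bs) : ℝ :=
  mutualInfoFull p - mutualInfoPos (coclust p CX CW)

/-- The elastic coupled co-clustering objective
`ℓ_T(C_Y, C_Z) = I(q) − I(q*) + α·D(q₁*‖π) + β·D(q₂*‖ρ)`. -/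
def lossT {A B As Bs : Type*} [Fintype A] [Fintype B] [Fintype As] [Fintype Bs]
    [DecidableEq As] [DecidableEq Bs]
    (q : A × B → ℝ) (CY : A → As) (CZ : B → Bs) (π : As → ℝ) (ρ : Bs → ℝ)
    (α β : ℝ) : EReal :=
  ((mutualInfoFull q - mutualInfoPos (coclust q CY CZ) : ℝ) : EReal)
    + (α : EReal) * KLdiv (marg₁ (coclust q CY CZ)) π
    + (β : EReal) * KLdiv (marg₂ (coclust q CY CZ)) ρ

end


section Helpers

set_option linter.unusedSectionVars false
set_option linter.unusedVariables false

open Finset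

variable {X W Xs Ws : Type*} [Fintype X] [Fintype W] [Nonempty X] [Nonempty W]
    [Fintype Xs] [Fintype Ws] [DecidableEq Xs] [DecidableEq Ws]
    (p : X × W → ℝ)

lemma marg1_pos (hpos : ∀ c, 0 < p c) (x : X) : 0 < marg₁ p x :=
  Finset.sum_pos (fun w _ => hpos _) Finset.univ_nonempty

lemma marg2_pos (hpos : ∀ c, 0 < p c) (w : W) : 0 < marg₂ p w :=
  Finset.sum_pos (fun x _ => hpos _) Finset.univ_nonempty

lemma coclust_nonneg (hpos : ∀ c, 0 < p c) (D : X → Xs) (CW : W → Ws) (cs : Xs × Ws) :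
    0 ≤ coclust p D CW cs :=
  Finset.sum_nonneg fun _ _ => Finset.sum_nonneg fun _ _ => (hpos _).le

lemma block_eq (D : X → Xs) (CW : W → Ws) (cs : Xs × Ws) :
    coclust p D CW cs
      = ∑ c ∈ Finset.univ.filter (fun c : X × W => (D c.1, CW c.2) = cs), p c := by
  rw [coclust, ← Finset.sum_product]
  refine (Finset.sum_congr ?_ fun _ _ => rfl).symm
  ext c
  simp [Finset.mem_filter, Finset.mem_product, Prod.ext_iff]

lemma sum_block (D : X → Xs) (CW : W → Ws) (f : Xs × Ws → ℝ) :
    ∑ c : X × W, p c * f (D c.1, CW c.2) = ∑ cs : Xs × Ws, coclust p D CW cs * f cs := by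
  rw [← Finset.sum_fiberwise Finset.univ (fun c : X × W => (D c.1, CW c.2))
      (fun c => p c * f (D c.1, CW c.2))]
  refine Finset.sum_congr rfl fun cs _ => ?_
  rw [block_eq p D CW cs, Finset.sum_mul]
  refine Finset.sum_congr rfl fun c hc => ?_
  rw [(Finset.mem_filter.mp hc).2]

lemma marg1_coclust (D : X → Xs) (CW : W → Ws) (xs : Xs) :
    marg₁ (coclust p D CW) xs = ∑ x ∈ Finset.univ.filter (fun x => D x = xs), marg₁ p x := by
  rw [marg₁]
  simp_rw [coclust]
  rw [show (∑ ws : Ws, ∑ x ∈ Finset.univ.filter (fun x => D x = xs),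
        ∑ w ∈ Finset.univ.filter (fun w => CW w = ws), p (x, w))
      = ∑ x ∈ Finset.univ.filter (fun x => D x = xs),
        ∑ ws : Ws, ∑ w ∈ Finset.univ.filter (fun w => CW w = ws), p (x, w)
      from Finset.sum_comm]
  refine Finset.sum_congr rfl fun x _ => ?_
  exact Finset.sum_fiberwise _ _ _

lemma marg2_coclust (D : X → Xs) (CW : W → Ws) (ws : Ws) :
    marg₂ (coclust p D CW) ws = ∑ w ∈ Finset.univ.filter (fun w => CW w = ws), marg₂ p w := by
  rw [marg₂]
  simp_rw [coclust]
  rw [show (∑ xs : Xs, ∑ x ∈ Finset.univ.filter (fun x => D x = xs),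
        ∑ w ∈ Finset.univ.filter (fun w => CW w = ws), p (x, w))
      = ∑ x : X, ∑ w ∈ Finset.univ.filter (fun w => CW w = ws), p (x, w)
      from Finset.sum_fiberwise _ _ _]
  rw [show (∑ x : X, ∑ w ∈ Finset.univ.filter (fun w => CW w = ws), p (x, w))
      = ∑ w ∈ Finset.univ.filter (fun w => CW w = ws), ∑ x : X, p (x, w)
      from Finset.sum_comm]
  rfl

lemma marg2_coclust_indep (D D' : X → Xs) (CW : W → Ws) (ws : Ws) :
    marg₂ (coclust p D CW) ws = marg₂ (coclust p D' CW) ws := by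
  rw [marg2_coclust, marg2_coclust]

lemma marg1_coclust_nonneg (hpos : ∀ c, 0 < p c) (D : X → Xs) (CW : W → Ws) (xs : Xs) :
    0 ≤ marg₁ (coclust p D CW) xs :=
  Finset.sum_nonneg fun _ _ => coclust_nonneg p hpos D CW _

lemma marg2_coclust_nonneg (hpos : ∀ c, 0 < p c) (D : X → Xs) (CW : W → Ws) (ws : Ws) :
    0 ≤ marg₂ (coclust p D CW) ws :=
  Finset.sum_nonneg fun _ _ => coclust_nonneg p hpos D CW _

lemma marg1_coclust_pos (hpos : ∀ c, 0 < p c) (D : X → Xs) (CW : W → Ws) (x : X) :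
    0 < marg₁ (coclust p D CW) (D x) := by
  rw [marg1_coclust]
  refine Finset.sum_pos' (fun y _ => (marg1_pos p hpos y).le) ⟨x, ?_, marg1_pos p hpos x⟩
  simp

lemma marg2_coclust_pos (hpos : ∀ c, 0 < p c) (D : X → Xs) (CW : W → Ws) (w : W) :
    0 < marg₂ (coclust p D CW) (CW w) := by
  rw [marg2_coclust]
  refine Finset.sum_pos' (fun y _ => (marg2_pos p hpos y).le) ⟨w, ?_, marg2_pos p hpos w⟩
  simp

lemma coclust_apply_pos (hpos : ∀ c, 0 < p c) (D : X → Xs) (CW : W → Ws) (x : X) (w : W) :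
    0 < coclust p D CW (D x, CW w) := by
  rw [block_eq]
  refine Finset.sum_pos' (fun c _ => (hpos c).le) ⟨(x, w), ?_, hpos _⟩
  simp

lemma coclust_pos_elim (D : X → Xs) (CW : W → Ws) (cs : Xs × Ws)
    (h : 0 < coclust p D CW cs) : (∃ x, D x = cs.1) ∧ (∃ w, CW w = cs.2) := by
  rw [block_eq] at h
  have hne : (Finset.univ.filter fun c : X × W => (D c.1, CW c.2) = cs).Nonempty := by
    by_contra hc
    rw [Finset.not_nonempty_iff_eq_empty] at hc
    rw [hc, Finset.sum_empty] at h
    exact lt_irrefl 0 h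
  obtain ⟨c, hc⟩ := hne
  have h2 := (Finset.mem_filter.mp hc).2
  exact ⟨⟨c.1, congrArg Prod.fst h2⟩, ⟨c.2, congrArg Prod.snd h2⟩⟩

lemma approxCondRow_self_pos (hpos : ∀ c, 0 < p c) (D : X → Xs) (CW : W → Ws) (x : X) (w : W) :
    0 < approxCondRow p D CW (D x) w := by
  unfold approxCondRow
  exact div_pos (mul_pos (coclust_apply_pos p hpos D CW x w) (marg2_pos p hpos w))
    (mul_pos (marg1_coclust_pos p hpos D CW x) (marg2_coclust_pos p hpos D CW w))

lemma approxCondRow_nonneg (hpos : ∀ c, 0 < p c) (CX : X → Xs) (CW : W → Ws) (xs : Xs) (w : W) :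
    0 ≤ approxCondRow p CX CW xs w :=
  div_nonneg (mul_nonneg (coclust_nonneg p hpos CX CW _) (marg2_pos p hpos w).le)
    (mul_nonneg (marg1_coclust_nonneg p hpos CX CW xs) (marg2_coclust_nonneg p hpos CX CW _))

lemma approx_pos_elim (hpos : ∀ c, 0 < p c) (CX : X → Xs) (CW : W → Ws) (xs : Xs) (w : W)
    (h : 0 < approxCondRow p CX CW xs w) :
    0 < coclust p CX CW (xs, CW w) ∧ 0 < marg₁ (coclust p CX CW) xs := by
  unfold approxCondRow at h
  rcases div_pos_iff.mp h with ⟨hn, hd⟩ | ⟨hn, _⟩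
  · constructor
    · rcases mul_pos_iff.mp hn with ⟨h1, _⟩ | ⟨_, h2⟩
      · exact h1
      · exact absurd h2 (not_lt.mpr (marg2_pos p hpos w).le)
    · rcases mul_pos_iff.mp hd with ⟨h1, _⟩ | ⟨_, h2⟩
      · exact h1
      · exact absurd h2 (not_lt.mpr (marg2_coclust_nonneg p hpos CX CW _))
  · exact absurd hn (not_lt.mpr
      (mul_nonneg (coclust_nonneg p hpos CX CW _) (marg2_pos p hpos w).le))

lemma sum_marg1_coclust (hsum : ∑ c, p c = 1) (D : X → Xs) (CW : W → Ws) :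
    ∑ xs, marg₁ (coclust p D CW) xs = 1 := by
  simp_rw [marg1_coclust]
  rw [show (∑ xs : Xs, ∑ x ∈ Finset.univ.filter (fun x => D x = xs), marg₁ p x)
      = ∑ x : X, marg₁ p x from Finset.sum_fiberwise _ _ _]
  rw [← hsum, Fintype.sum_prod_type]
  rfl

lemma lossA_eq (hpos : ∀ c, 0 < p c) (D : X → Xs) (CW : W → Ws) :
    lossA p D CW
      = ∑ c : X × W, p c * Real.log (condRow p c.1 c.2 / approxCondRow p D CW (D c.1) c.2) := by
  have key : ∀ c : X × W,
      Real.log (condRow p c.1 c.2 / approxCondRow p D CW (D c.1) c.2)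
        = Real.log (p c / (marg₁ p c.1 * marg₂ p c.2))
          - Real.log (coclust p D CW (D c.1, CW c.2) /
              (marg₁ (coclust p D CW) (D c.1) * marg₂ (coclust p D CW) (CW c.2))) := by
    intro c
    have hp1 := (marg1_pos p hpos c.1).ne'
    have hp2 := (marg2_pos p hpos c.2).ne'
    have hq := (coclust_apply_pos p hpos D CW c.1 c.2).ne'
    have hQ1 := (marg1_coclust_pos p hpos D CW c.1).ne'
    have hQ2 := (marg2_coclust_pos p hpos D CW c.2).ne'
    rw [← Real.log_div
      (div_pos (hpos c) (mul_pos (marg1_pos p hpos c.1) (marg2_pos p hpos c.2))).ne'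
      (div_pos (coclust_apply_pos p hpos D CW c.1 c.2)
        (mul_pos (marg1_coclust_pos p hpos D CW c.1)
          (marg2_coclust_pos p hpos D CW c.2))).ne']
    congr 1
    unfold condRow approxCondRow
    field_simp
  simp_rw [key, mul_sub]
  rw [Finset.sum_sub_distrib, lossA]
  congr 1
  · rw [mutualInfoFull]
    exact (Fintype.sum_prod_type
      (f := fun c : X × W => p c * Real.log (p c / (marg₁ p c.1 * marg₂ p c.2)))).symm
  · rw [mutualInfoPos, Finset.sum_filter_of_ne]
    · rw [sum_block p D CW (fun cs => Real.log (coclust p D CW cs /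
        (marg₁ (coclust p D CW) cs.1 * marg₂ (coclust p D CW) cs.2)))]
    · intro cs _ hne
      by_contra hq
      apply hne
      have h0 : coclust p D CW cs = 0 :=
        le_antisymm (not_lt.mp hq) (coclust_nonneg p hpos D CW cs)
      rw [h0, zero_mul]

lemma gibbs_step (hpos : ∀ c, 0 < p c) (hsum : ∑ c, p c = 1)
    (CX CX' : X → Xs) (CW : W → Ws)
    (hA : ∀ x w, 0 < approxCondRow p CX CW (CX' x) w) :
    ∑ c : X × W, p c * Real.log (condRow p c.1 c.2 / approxCondRow p CX' CW (CX' c.1) c.2)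
      ≤ ∑ c : X × W, p c * Real.log (condRow p c.1 c.2 / approxCondRow p CX CW (CX' c.1) c.2) := by
  set qO := coclust p CX CW with hqO
  set qN := coclust p CX' CW with hqN
  set g : Xs × Ws → ℝ := fun cs => qO cs * marg₁ qN cs.1 / (marg₁ qO cs.1 * qN cs) with hg
  have hgpos : ∀ (x : X) (w : W), 0 < g (CX' x, CW w) := by
    intro x w
    obtain ⟨hqOpos, hQ1Opos⟩ := approx_pos_elim p hpos CX CW (CX' x) w (hA x w)
    exact div_pos (mul_pos hqOpos (marg1_coclust_pos p hpos CX' CW x))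
      (mul_pos hQ1Opos (coclust_apply_pos p hpos CX' CW x w))
  have hterm : ∀ c : X × W,
      p c * Real.log (condRow p c.1 c.2 / approxCondRow p CX' CW (CX' c.1) c.2)
        = p c * Real.log (condRow p c.1 c.2 / approxCondRow p CX CW (CX' c.1) c.2)
          + p c * Real.log (g (CX' c.1, CW c.2)) := by
    intro c
    obtain ⟨hqOpos, hQ1Opos⟩ := approx_pos_elim p hpos CX CW (CX' c.1) c.2 (hA c.1 c.2)
    have hcond : 0 < condRow p c.1 c.2 := div_pos (hpos _) (marg1_pos p hpos c.1)
    have haO : 0 < approxCondRow p CX CW (CX' c.1) c.2 := hA c.1 c.2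
    have haN : 0 < approxCondRow p CX' CW (CX' c.1) c.2 :=
      approxCondRow_self_pos p hpos CX' CW c.1 c.2
    have hratio : condRow p c.1 c.2 / approxCondRow p CX' CW (CX' c.1) c.2
        = (condRow p c.1 c.2 / approxCondRow p CX CW (CX' c.1) c.2) * g (CX' c.1, CW c.2) := by
      have hQ2eq : marg₂ qN (CW c.2) = marg₂ qO (CW c.2) :=
        marg2_coclust_indep p CX' CX CW (CW c.2)
      have h1 := hqOpos.ne'
      have h2 := (coclust_apply_pos p hpos CX' CW c.1 c.2).ne'
      have h3 := hQ1Opos.ne'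
      have h4 := (marg1_coclust_pos p hpos CX' CW c.1).ne'
      have h5 := (marg2_pos p hpos c.2).ne'
      have h6 := (marg2_coclust_pos p hpos CX CW c.2).ne'
      rw [hg]
      unfold approxCondRow
      rw [← hqO, ← hqN, hQ2eq]
      rw [← hqO] at h1 h3 h6; rw [← hqN] at h2 h4
      field_simp
    rw [hratio, Real.log_mul (div_pos hcond haO).ne' (hgpos c.1 c.2).ne', mul_add]
  simp_rw [hterm]
  rw [Finset.sum_add_distrib]
  have hT : ∑ c : X × W, p c * Real.log (g (CX' c.1, CW c.2)) ≤ 0 := by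
    have hstep1 : ∑ c : X × W, p c * Real.log (g (CX' c.1, CW c.2))
        ≤ ∑ c : X × W, p c * (g (CX' c.1, CW c.2) - 1) := by
      refine Finset.sum_le_sum fun c _ => ?_
      exact mul_le_mul_of_nonneg_left
        (Real.log_le_sub_one_of_pos (hgpos c.1 c.2)) (hpos c).le
    have hS : ∑ c : X × W, p c * g (CX' c.1, CW c.2) ≤ 1 := by
      rw [sum_block p CX' CW g, ← hqN]
      have hstep2 : ∀ cs : Xs × Ws, qN cs * g cs ≤ qO cs * marg₁ qN cs.1 / marg₁ qO cs.1 := by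
        intro cs
        rcases eq_or_lt_of_le (coclust_nonneg p hpos CX' CW cs) with h0 | hq
        · rw [hqN, ← h0, zero_mul]
          exact div_nonneg (mul_nonneg (coclust_nonneg p hpos CX CW cs)
            (marg1_coclust_nonneg p hpos CX' CW cs.1))
            (marg1_coclust_nonneg p hpos CX CW cs.1)
        · obtain ⟨⟨x, hx⟩, ⟨w, hw⟩⟩ := coclust_pos_elim p CX' CW cs hq
          have hQ1O : marg₁ qO cs.1 ≠ 0 := by
            rw [← hx]
            exact (approx_pos_elim p hpos CX CW (CX' x) w (hA x w)).2.ne'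
          have hqNne : qN cs ≠ 0 := hq.ne'
          refine le_of_eq ?_
          rw [hg]
          field_simp
      calc ∑ cs : Xs × Ws, qN cs * g cs
          ≤ ∑ cs : Xs × Ws, qO cs * marg₁ qN cs.1 / marg₁ qO cs.1 :=
            Finset.sum_le_sum fun cs _ => hstep2 cs
        _ = ∑ xs, marg₁ qN xs / marg₁ qO xs * marg₁ qO xs := by
            rw [Fintype.sum_prod_type]
            refine Finset.sum_congr rfl fun xs _ => ?_
            have h1 : ∑ ws, qO (xs, ws) * marg₁ qN (xs, ws).1 / marg₁ qO (xs, ws).1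
                = (∑ ws, qO (xs, ws)) * (marg₁ qN xs / marg₁ qO xs) := by
              rw [Finset.sum_mul]
              exact Finset.sum_congr rfl fun ws _ => mul_div_assoc _ _ _
            rw [h1, show (∑ ws, qO (xs, ws)) = marg₁ qO xs from rfl]
            ring
        _ ≤ ∑ xs, marg₁ qN xs := by
            refine Finset.sum_le_sum fun xs _ => ?_
            rcases eq_or_ne (marg₁ qO xs) 0 with h0 | hne
            · rw [h0, mul_zero]
              exact marg1_coclust_nonneg p hpos CX' CW xs
            · rw [div_mul_cancel₀ _ hne]
        _ = 1 := sum_marg1_coclust p hsum CX' CW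
    have hsum' : ∑ c : X × W, p c * (g (CX' c.1, CW c.2) - 1)
        = (∑ c : X × W, p c * g (CX' c.1, CW c.2)) - 1 := by
      simp_rw [mul_sub, mul_one]
      rw [Finset.sum_sub_distrib, hsum]
    calc ∑ c : X × W, p c * Real.log (g (CX' c.1, CW c.2))
        ≤ ∑ c : X × W, p c * (g (CX' c.1, CW c.2) - 1) := hstep1
      _ = (∑ c : X × W, p c * g (CX' c.1, CW c.2)) - 1 := hsum'
      _ ≤ 0 := by linarith
  linarith

end Helpers

/-- Row (cell) update monotonicity: if for every `x`,
`D(p(·|x) ‖ p̂(·|C_X' x)) ≤ D(p(·|x) ‖ p̂(·|C_X x))` (with `p̂` computed from the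
current pair `(C_X, C_W)`), then `ℓ_A(C_X', C_W) ≤ ℓ_A(C_X, C_W)`. -/
theorem row_update_monotone {X W Xs Ws : Type*} [Fintype X] [Fintype W] [Nonempty X] [Nonempty W]
    [Fintype Xs] [Fintype Ws] [DecidableEq Xs] [DecidableEq Ws]
    (p : X × W → ℝ) (hpos : ∀ c, 0 < p c) (hsum : ∑ c, p c = 1)
    (CX : X → Xs) (CW : W → Ws) (CX' : X → Xs)
    (hupd : ∀ x : X,
      KLdiv (condRow p x) (approxCondRow p CX CW (CX' x))
        ≤ KLdiv (condRow p x) (approxCondRow p CX CW (CX x))) :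
    lossA p CX' CW ≤ lossA p CX CW := by
  classical
  have hcond_pos : ∀ (x : X) (w : W), 0 < condRow p x w :=
    fun x w => div_pos (hpos _) (marg1_pos p hpos x)
  have hfilter : ∀ x : X,
      (Finset.univ.filter fun w => 0 < condRow p x w) = Finset.univ :=
    fun x => Finset.filter_true_of_mem (fun w _ => hcond_pos x w)
  have hRHS : ∀ x, KLdiv (condRow p x) (approxCondRow p CX CW (CX x))
      = ((∑ w, condRow p x w *
          Real.log (condRow p x w / approxCondRow p CX CW (CX x) w) : ℝ) : EReal) := by
    intro x
    have hno : ¬ ∃ w, 0 < condRow p x w ∧ approxCondRow p CX CW (CX x) w = 0 := by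
      rintro ⟨w, -, h0⟩
      exact (approxCondRow_self_pos p hpos CX CW x w).ne' h0
    rw [KLdiv, if_neg hno, hfilter x]
  have hA' : ∀ (x : X) (w : W), 0 < approxCondRow p CX CW (CX' x) w := by
    intro x w
    rcases eq_or_lt_of_le (approxCondRow_nonneg p hpos CX CW (CX' x) w) with h0 | h
    · exfalso
      have hu := hupd x
      rw [hRHS x, KLdiv, if_pos ⟨w, hcond_pos x w, h0.symm⟩] at hu
      exact absurd hu (not_le.mpr (EReal.coe_lt_top _))
    · exact h
  have hLHS : ∀ x, KLdiv (condRow p x) (approxCondRow p CX CW (CX' x))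
      = ((∑ w, condRow p x w *
          Real.log (condRow p x w / approxCondRow p CX CW (CX' x) w) : ℝ) : EReal) := by
    intro x
    have hno : ¬ ∃ w, 0 < condRow p x w ∧ approxCondRow p CX CW (CX' x) w = 0 := by
      rintro ⟨w, -, h0⟩
      exact (hA' x w).ne' h0
    rw [KLdiv, if_neg hno, hfilter x]
  have hreal : ∀ x : X,
      ∑ w, condRow p x w * Real.log (condRow p x w / approxCondRow p CX CW (CX' x) w)
        ≤ ∑ w, condRow p x w * Real.log (condRow p x w / approxCondRow p CX CW (CX x) w) := by
    intro x
    have hu := hupd x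
    rw [hLHS x, hRHS x] at hu
    exact_mod_cast hu
  have key : ∑ c : X × W, p c * Real.log (condRow p c.1 c.2 / approxCondRow p CX CW (CX' c.1) c.2)
      ≤ ∑ c : X × W, p c * Real.log (condRow p c.1 c.2 / approxCondRow p CX CW (CX c.1) c.2) := by
    rw [Fintype.sum_prod_type, Fintype.sum_prod_type]
    refine Finset.sum_le_sum fun x _ => ?_
    have h := mul_le_mul_of_nonneg_left (hreal x) (marg1_pos p hpos x).le
    rw [Finset.mul_sum, Finset.mul_sum] at h
    have hpc : ∀ w : W, marg₁ p x * condRow p x w = p (x, w) := by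
      intro w
      rw [condRow, mul_div_cancel₀ _ (marg1_pos p hpos x).ne']
    calc ∑ w, p (x, w) * Real.log (condRow p x w / approxCondRow p CX CW (CX' x) w)
        = ∑ w, marg₁ p x * (condRow p x w *
            Real.log (condRow p x w / approxCondRow p CX CW (CX' x) w)) := by
          refine Finset.sum_congr rfl fun w _ => ?_
          rw [← mul_assoc, hpc w]
      _ ≤ ∑ w, marg₁ p x * (condRow p x w *
            Real.log (condRow p x w / approxCondRow p CX CW (CX x) w)) := h
      _ = ∑ w, p (x, w) * Real.log (condRow p x w / approxCondRow p CX CW (CX x) w) := by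
          refine Finset.sum_congr rfl fun w _ => ?_
          rw [← mul_assoc, hpc w]
  rw [lossA_eq p hpos CX' CW, lossA_eq p hpos CX CW]
  exact le_trans (gibbs_step p hpos hsum CX CX' CW hA') key
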